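/- arXiv:1411.6810 — 3 statements merged into one kernel-verified Lean document; each statement's English description precedes it below -/
import Mathlib

section
/- Let P be a finite set of n points in ℝ² and K a convex compact prototype. Then the number of distinct covered point sets of canonical translates of K (equivalently, distinct canonical translates) is at most k + e₀ ≤ k + n, where k is the number of pairs of point inverses of K through points of P whose boundaries intersect and e₀ the number of point inverses disjoint from all others. -/
open Set Metric Bornology


abbrev Plane := EuclideanSpace ℝ (Fin 2)

def translateSet (T : Set Plane) (v : Plane) : Set Plane := (· + v) '' T

def coveredSet (P T₀ : Set Plane) (v : Plane) : Set Plane := P ∩ translateSet T₀ v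

/-- The point inverse of `K` through `p`: the set `p - K` of positions `v` such that
the translate `K + v` contains `p`. -/
def pointInv (K : Set Plane) (p : Plane) : Set Plane := (fun x => p - x) '' K

/-- The collection of covered point sets of canonical translates of `K` with respect
to `P`. -/
def canonicalSets (P K : Set Plane) : Set (Set Plane) :=
  {S | ∃ v : Plane, S = coveredSet P K v ∧ S.Nonempty ∧
        ∀ w : Plane, ¬ S ⊂ coveredSet P K w}


namespace S9

def lexLT (x y : Plane) : Prop := x 0 < y 0 ∨ (x 0 = y 0 ∧ x 1 < y 1)

lemma lexLT_total (x y : Plane) : lexLT x y ∨ x = y ∨ lexLT y x := by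
  rcases lt_trichotomy (x 0) (y 0) with h | h | h
  · exact Or.inl (Or.inl h)
  · rcases lt_trichotomy (x 1) (y 1) with h' | h' | h'
    · exact Or.inl (Or.inr ⟨h, h'⟩)
    · refine Or.inr (Or.inl (PiLp.ext fun i => ?_))
      fin_cases i <;> assumption
    · exact Or.inr (Or.inr (Or.inr ⟨h.symm, h'⟩))
  · exact Or.inr (Or.inr (Or.inl h))

lemma lexLT_irrefl (x : Plane) : ¬ lexLT x x := by
  rintro (h | ⟨h, h'⟩) <;> exact lt_irrefl _ (by assumption)

lemma convex_lexLT (v : Plane) : Convex ℝ {x | lexLT x v} := by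
  intro x hx y hy a b ha hb hab
  have hx0 : x 0 ≤ v 0 := by rcases hx with h | ⟨h, _⟩ <;> [exact h.le; exact h.le]
  have hy0 : y 0 ≤ v 0 := by rcases hy with h | ⟨h, _⟩ <;> [exact h.le; exact h.le]
  have hc0 : (a • x + b • y) 0 = a * x 0 + b * y 0 := by
    simp [PiLp.add_apply, PiLp.smul_apply, smul_eq_mul]
  have hc1 : (a • x + b • y) 1 = a * x 1 + b * y 1 := by
    simp [PiLp.add_apply, PiLp.smul_apply, smul_eq_mul]
  have t1 : 0 ≤ a * (v 0 - x 0) := mul_nonneg ha (by linarith)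
  have t2 : 0 ≤ b * (v 0 - y 0) := mul_nonneg hb (by linarith)
  have key : a * x 0 + b * y 0 + (a * (v 0 - x 0) + b * (v 0 - y 0)) = v 0 := by
    have : a * x 0 + b * y 0 + (a * (v 0 - x 0) + b * (v 0 - y 0)) = (a + b) * v 0 := by ring
    rw [this, hab, one_mul]
  have hle : a * x 0 + b * y 0 ≤ v 0 := by linarith
  rcases eq_or_lt_of_le hle with he | hl
  · -- equality case: a*(v0-x0) = 0 and b*(v0-y0) = 0
    have hz1 : a * (v 0 - x 0) = 0 := by linarith
    have hz2 : b * (v 0 - y 0) = 0 := by linarith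
    refine Or.inr ⟨by rw [hc0]; exact he, ?_⟩
    rw [hc1]
    have key1 : (a + b) * v 1 = v 1 := by rw [hab, one_mul]
    rcases eq_or_lt_of_le ha with rfl | ha'
    · have hb1 : b = 1 := by linarith
      have hy0' : y 0 = v 0 := by
        rcases mul_eq_zero.1 hz2 with h | h
        · exact absurd h (by linarith)
        · linarith
      have : y 1 < v 1 := by
        rcases hy with h | ⟨_, h'⟩
        · exact absurd hy0' h.ne
        · exact h'
      rw [hb1]; linarith
    rcases eq_or_lt_of_le hb with rfl | hb'
    · have ha1 : a = 1 := by linarith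
      have hx0' : x 0 = v 0 := by
        rcases mul_eq_zero.1 hz1 with h | h
        · exact absurd h (by linarith)
        · linarith
      have : x 1 < v 1 := by
        rcases hx with h | ⟨_, h'⟩
        · exact absurd hx0' h.ne
        · exact h'
      rw [ha1]; linarith
    · have hx0' : x 0 = v 0 := by
        rcases mul_eq_zero.1 hz1 with h | h
        · exact absurd h (by linarith)
        · linarith
      have hy0' : y 0 = v 0 := by
        rcases mul_eq_zero.1 hz2 with h | h
        · exact absurd h (by linarith)
        · linarith
      have hx1 : x 1 < v 1 := by
        rcases hx with h | ⟨_, h'⟩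
        · exact absurd hx0' h.ne
        · exact h'
      have hy1 : y 1 < v 1 := by
        rcases hy with h | ⟨_, h'⟩
        · exact absurd hy0' h.ne
        · exact h'
      have u1 : a * x 1 < a * v 1 := by exact mul_lt_mul_of_pos_left hx1 ha'
      have u2 : b * y 1 < b * v 1 := by exact mul_lt_mul_of_pos_left hy1 hb'
      nlinarith [key1]
  · left; rw [hc0]; exact hl


def IsLexMin (D : Set Plane) (v : Plane) : Prop := v ∈ D ∧ ∀ x ∈ D, ¬ lexLT x v

lemma exists_isLexMin {D : Set Plane} (hD : IsCompact D) (hne : D.Nonempty) :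
    ∃ v, IsLexMin D v := by
  have hc0 : Continuous fun x : Plane => x 0 := (continuous_apply _).comp (PiLp.continuous_ofLp 2 _)
  have hc1 : Continuous fun x : Plane => x 1 := (continuous_apply _).comp (PiLp.continuous_ofLp 2 _)
  obtain ⟨m, hmD, hm⟩ := hD.exists_isMinOn hne hc0.continuousOn
  set D' := D ∩ {x | x 0 = m 0} with hD'
  have hD'c : IsCompact D' := hD.inter_right (isClosed_eq hc0 continuous_const)
  have hD'ne : D'.Nonempty := ⟨m, hmD, rfl⟩
  obtain ⟨v, hvD', hv⟩ := hD'c.exists_isMinOn hD'ne hc1.continuousOn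
  refine ⟨v, hvD'.1, ?_⟩
  rintro x hx (h | ⟨h, h'⟩)
  · have := hm hmD -- dummy
    have h1 : m 0 ≤ x 0 := hm hx
    have h2 : v 0 = m 0 := hvD'.2
    linarith
  · have h2 : v 0 = m 0 := hvD'.2
    have hx' : x ∈ D' := ⟨hx, by simp only [mem_setOf_eq]; rw [h, h2]⟩
    have h3 : v 1 ≤ x 1 := hv hx'
    linarith

lemma isLexMin_unique {D : Set Plane} {v w : Plane} (hv : IsLexMin D v) (hw : IsLexMin D w) :
    v = w := by
  rcases lexLT_total v w with h | h | h
  · exact absurd h (hw.2 v hv.1)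
  · exact h
  · exact absurd h (hv.2 w hw.1)


lemma apex_lemma {C1 C2 C3 L : Set Plane} (h1 : Convex ℝ C1) (h2 : Convex ℝ C2)
    (h3 : Convex ℝ C3) (hL : Convex ℝ L) {v w1 w2 w3 : Plane}
    (hv1 : v ∈ C1) (hv2 : v ∈ C2) (hv3 : v ∈ C3) (hvL : v ∉ L)
    (hw1 : w1 ∈ C2 ∩ C3 ∩ L) (hw2 : w2 ∈ C1 ∩ C3 ∩ L) (hw3 : w3 ∈ C1 ∩ C2 ∩ L) :
    (C1 ∩ C2 ∩ C3 ∩ L).Nonempty := by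
  have hvL' := hvL
  set f : Fin 4 → Plane := ![v, w1, w2, w3] with hf
  have f0 : f 0 = v := rfl
  have f1 : f 1 = w1 := rfl
  have f2 : f 2 = w2 := rfl
  have f3 : f 3 = w3 := rfl
  have hdep : ¬ AffineIndependent ℝ f := by
    intro h
    have hcard := h.card_le_finrank_succ
    rw [Fintype.card_fin] at hcard
    have h2' : Module.finrank ℝ Plane = 2 := finrank_euclideanSpace_fin
    have hle := Submodule.finrank_le (vectorSpan ℝ (Set.range f))
    omega
  obtain ⟨I, z, hzI, hzIc⟩ := Convex.radon_partition hdep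
  have key : ∀ (D : Set Plane), Convex ℝ D → ∀ i : Fin 4,
      (∀ j : Fin 4, j ≠ i → f j ∈ D) → z ∈ D := by
    intro D hD i hj
    by_cases hi : i ∈ I
    · refine convexHull_min ?_ hD hzIc
      rintro _ ⟨j, hjIc, rfl⟩
      exact hj j (by rintro rfl; exact hjIc hi)
    · refine convexHull_min ?_ hD hzI
      rintro _ ⟨j, hjI, rfl⟩
      exact hj j (by rintro rfl; exact hi hjI)
  have hz1 : z ∈ C1 := key C1 h1 1 (by
    intro j hj
    fin_cases j
    · exact hv1
    · exact absurd rfl hj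
    · exact hw2.1.1
    · exact hw3.1.1)
  have hz2 : z ∈ C2 := key C2 h2 2 (by
    intro j hj
    fin_cases j
    · exact hv2
    · exact hw1.1.1
    · exact absurd rfl hj
    · exact hw3.1.2)
  have hz3 : z ∈ C3 := key C3 h3 3 (by
    intro j hj
    fin_cases j
    · exact hv3
    · exact hw1.1.2
    · exact hw2.1.2
    · exact absurd rfl hj)
  have hzL : z ∈ L := key L hL 0 (by
    intro j hj
    fin_cases j
    · exact absurd rfl hj
    · exact hw1.2
    · exact hw2.2
    · exact hw3.2)
  exact ⟨z, ⟨⟨hz1, hz2⟩, hz3⟩, hzL⟩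

lemma helly_apex {α : Type*} [DecidableEq α] :
    ∀ (n : ℕ) (t : Finset α) (C : α → Set Plane) (L : Set Plane) (v : Plane),
    t.card = n → (∀ a ∈ t, Convex ℝ (C a)) → Convex ℝ L →
    (∀ a ∈ t, v ∈ C a) → v ∉ L →
    (∀ a ∈ t, ∀ b ∈ t, (C a ∩ C b ∩ L).Nonempty) → t.Nonempty →
    ((⋂ a ∈ t, C a) ∩ L).Nonempty := by
  intro n
  induction n with
  | zero =>
    intro t C L v hcard _ _ _ _ _ hne
    rw [Finset.card_eq_zero] at hcard
    simp [hcard] at hne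
  | succ n IH =>
    intro t C L v hcard hC hL hv hvL hpair hne
    obtain ⟨a, ha⟩ := hne
    by_cases hn : n = 0
    · have ht : t = {a} := by
        apply Finset.eq_singleton_iff_unique_mem.2
        refine ⟨ha, fun b hb => ?_⟩
        by_contra hne'
        have : 2 ≤ t.card := Finset.one_lt_card.2 ⟨b, hb, a, ha, hne'⟩
        omega
      obtain ⟨z, hz⟩ := hpair a ha a ha
      refine ⟨z, ?_, hz.2⟩
      rw [ht]
      simp only [Finset.mem_singleton, iInter_iInter_eq_left]
      exact hz.1.1
    · set s := t.erase a with hs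
      have hscard : s.card = n := by rw [hs, Finset.card_erase_of_mem ha, hcard]; rfl
      have hsne : s.Nonempty := Finset.card_pos.1 (by omega)
      have hsub : ∀ b ∈ s, b ∈ t := fun b hb => Finset.mem_of_mem_erase hb
      obtain ⟨z, hz⟩ := IH s (fun b => C b ∩ C a) L v hscard
        (fun b hb => (hC b (hsub b hb)).inter (hC a ha)) hL
        (fun b hb => ⟨hv b (hsub b hb), hv a ha⟩) hvL
        (fun b hb c hc => by
          obtain ⟨u1, hu1⟩ := hpair c (hsub c hc) a ha
          obtain ⟨u2, hu2⟩ := hpair b (hsub b hb) a ha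
          obtain ⟨u3, hu3⟩ := hpair b (hsub b hb) c (hsub c hc)
          obtain ⟨z', hz'⟩ := apex_lemma (hC b (hsub b hb)) (hC c (hsub c hc)) (hC a ha) hL
            (hv b (hsub b hb)) (hv c (hsub c hc)) (hv a ha) hvL hu1 hu2 hu3
          exact ⟨z', by
            simp only [mem_inter_iff] at hz' ⊢
            tauto⟩)
        hsne
      refine ⟨z, ?_, hz.2⟩
      have hz1 := hz.1
      simp only [mem_iInter] at hz1 ⊢
      intro b hb
      rcases eq_or_ne b a with rfl | hba
      · obtain ⟨c, hc⟩ := hsne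
        exact (hz1 c hc).2
      · exact (hz1 b (Finset.mem_erase.2 ⟨hba, hb⟩)).1


lemma frontier_mem_segment {A : Set Plane} (hA : IsClosed A) {x y : Plane}
    (hx : x ∈ A) (hy : y ∉ A) : ∃ z ∈ frontier A, z ∈ segment ℝ x y := by
  set g : ℝ → Plane := fun s => x + s • (y - x) with hg
  have hgc : Continuous g := by
    apply continuous_const.add
    exact continuous_id.smul continuous_const
  set T : Set ℝ := Icc (0:ℝ) 1 ∩ g ⁻¹' A with hT
  have hTc : IsCompact T := isCompact_Icc.inter_right (hA.preimage hgc)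
  have hTne : T.Nonempty := ⟨0, ⟨le_refl _, zero_le_one⟩, by simp [hg, hx]⟩
  have hTbdd : BddAbove T := hTc.bddAbove
  set s₀ := sSup T with hs₀def
  have hs₀ : s₀ ∈ T := hTc.sSup_mem hTne
  have hg1 : g 1 = y := by simp [hg]
  have hs₀lt : s₀ < 1 := by
    rcases lt_or_eq_of_le hs₀.1.2 with h | h
    · exact h
    · exfalso; apply hy; rw [← hg1, ← h]; exact hs₀.2
  refine ⟨g s₀, ?_, ?_⟩
  · -- frontier membership
    rw [frontier_eq_closure_inter_closure]
    refine ⟨subset_closure hs₀.2, ?_⟩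
    rw [Metric.mem_closure_iff]
    intro ε hε
    set δ := min ((1 - s₀)/2) (ε/(‖y - x‖+1)) with hδdef
    have hnorm : (0:ℝ) ≤ ‖y - x‖ := norm_nonneg _
    have hδpos : 0 < δ := lt_min (by linarith) (by positivity)
    refine ⟨g (s₀ + δ), ?_, ?_⟩
    · intro hmem
      have : s₀ + δ ∈ T := ⟨⟨by linarith [hs₀.1.1], by
        have := min_le_left ((1 - s₀)/2) (ε/(‖y - x‖+1)); linarith⟩, hmem⟩
      have := le_csSup hTbdd this
      linarith
    · have : g s₀ - g (s₀ + δ) = (-δ) • (y - x) := by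
        simp only [hg]
        module
      rw [dist_eq_norm, this, norm_smul]
      simp only [norm_neg, Real.norm_eq_abs, abs_of_pos hδpos]
      have h1 : δ ≤ ε/(‖y - x‖+1) := min_le_right _ _
      have h2 : δ * ‖y - x‖ ≤ ε/(‖y - x‖+1) * ‖y - x‖ :=
        mul_le_mul_of_nonneg_right h1 hnorm
      have h3 : ε/(‖y - x‖+1) * ‖y - x‖ < ε := by
        rw [div_mul_eq_mul_div, div_lt_iff₀ (by linarith)]
        nlinarith
      exact lt_of_le_of_lt h2 h3
  · rw [segment_eq_image']
    exact ⟨s₀, ⟨hs₀.1.1, hs₀.1.2⟩, rfl⟩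

lemma frontier_preconnected {A : Set Plane} (hAc : IsCompact A) (hAv : Convex ℝ A)
    (hint : (interior A).Nonempty) : IsPreconnected (frontier A) := by
  obtain ⟨e, _, _, h3⟩ :=
    exists_homeomorph_image_interior_closure_frontier_eq_unitBall hAv hint hAc.isBounded
  have heq : frontier A = e.symm '' (Metric.sphere 0 1) := by
    rw [← h3]
    ext w
    simp only [mem_image]
    constructor
    · intro hw
      exact ⟨e w, ⟨w, hw, rfl⟩, e.symm_apply_apply w⟩
    · rintro ⟨u, ⟨u', hu', rfl⟩, rfl⟩
      simpa [e.symm_apply_apply] using hu'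
  rw [heq]
  have hrank : 1 < Module.rank ℝ Plane := by
    have h1 : Module.finrank ℝ Plane = 2 := finrank_euclideanSpace_fin
    have h2 : (Module.finrank ℝ Plane : Cardinal) = Module.rank ℝ Plane :=
      Module.finrank_eq_rank ℝ Plane
    rw [h1] at h2
    rw [← h2]
    exact_mod_cast one_lt_two
  exact ((isConnected_sphere hrank 0 zero_le_one).isPreconnected).image _
    e.symm.continuous.continuousOn


lemma frontier_inter_frontier_translate {A : Set Plane} {c : Plane}
    (hAc : IsCompact A) (hAv : Convex ℝ A) (hc : c ≠ 0)
    (hint : (A ∩ ((fun x => x + c) '' A)).Nonempty) :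
    (frontier A ∩ frontier ((fun x => x + c) '' A)).Nonempty := by
  set B : Set Plane := (fun x => x + c) '' A with hB
  have hcont : Continuous fun x : Plane => x + c := continuous_id.add continuous_const
  have hBc : IsCompact B := hAc.image hcont
  have hBv : Convex ℝ B := by
    have : B = (fun x => c + x) '' A := by
      simp only [hB]; ext w; simp [add_comm]
    rw [this]; exact hAv.translate c
  have hAcl : IsClosed A := hAc.isClosed
  have hBcl : IsClosed B := hBc.isClosed
  have hmemB : ∀ w : Plane, w ∈ B ↔ w - c ∈ A := by
    intro w
    constructor
    · rintro ⟨u, hu, rfl⟩; simpa using hu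
    · intro h; exact ⟨w - c, h, by simp⟩
  have hcsq : (0:ℝ) < @inner ℝ _ _ c c := by
    rw [real_inner_self_eq_norm_sq]
    exact pow_pos (norm_pos_iff.2 hc) 2
  by_cases hintA : (interior A).Nonempty
  · -- main case
    by_contra hfr
    rw [not_nonempty_iff_eq_empty] at hfr
    have hconn := frontier_preconnected hAc hAv hintA
    -- a point of B not in A
    obtain ⟨c₀, hc₀A, hc₀B⟩ := hint
    have hinner : Continuous fun x : Plane => @inner ℝ _ _ c x :=
      continuous_const.inner continuous_id
    obtain ⟨xmax, hxmaxA, hxmax⟩ := hAc.exists_isMaxOn ⟨c₀, hc₀A⟩ hinner.continuousOn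
    have hbB : xmax + c ∈ B := ⟨xmax, hxmaxA, rfl⟩
    have hbA : xmax + c ∉ A := by
      intro h
      have h1 : @inner ℝ _ _ c (xmax + c) ≤ @inner ℝ _ _ c xmax := hxmax h
      rw [inner_add_right] at h1
      linarith
    -- frontier point of A inside B
    obtain ⟨z, hzfr, hzseg⟩ := frontier_mem_segment hAcl hc₀A hbA
    have hzB : z ∈ B := hBv.segment_subset hc₀B hbB hzseg
    have hzint : z ∈ interior B := by
      have hznfr : z ∉ frontier B := fun h =>
        Set.eq_empty_iff_forall_notMem.1 hfr z ⟨hzfr, h⟩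
      by_contra hnot
      exact hznfr (by rw [frontier]; exact ⟨subset_closure hzB, hnot⟩)
    -- frontier A ⊆ B via preconnectedness
    have hfrsub : frontier A ⊆ B := by
      intro w hw
      by_contra hwB
      have happly := hconn (interior B) (closure B)ᶜ isOpen_interior
        (isClosed_closure.isOpen_compl) ?_ ⟨z, hzfr, hzint⟩ ⟨w, hw, fun h => hwB (hBcl.closure_eq ▸ h)⟩
      · obtain ⟨u, _, huint, hucl⟩ := happly
        exact hucl (subset_closure (interior_subset huint))
      · intro u hu
        have hunfr : u ∉ frontier B := fun h =>
          Set.eq_empty_iff_forall_notMem.1 hfr u ⟨hu, h⟩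
        by_cases h1 : u ∈ closure B
        · left
          by_contra h2
          exact hunfr (by rw [frontier]; exact ⟨h1, h2⟩)
        · right; exact h1
    -- a point of A not in B
    obtain ⟨xmin, hxminA, hxmin⟩ := hAc.exists_isMinOn ⟨c₀, hc₀A⟩ hinner.continuousOn
    have haB : xmin ∉ B := by
      intro h
      rw [hmemB] at h
      have h1 : @inner ℝ _ _ c xmin ≤ @inner ℝ _ _ c (xmin - c) := hxmin h
      rw [inner_sub_right] at h1
      linarith
    -- far points outside A
    obtain ⟨r, hr⟩ := hAc.isBounded.subset_ball (0 : Plane)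
    have hcpos : (0:ℝ) < ‖c‖ := norm_pos_iff.2 hc
    set T₀ : ℝ := (r + ‖xmin‖)/‖c‖ + 1 with hT₀
    have hxmr : ‖xmin‖ < r := by simpa using hr hxminA
    have hT₀pos : 0 < T₀ := by
      have h0 : (0:ℝ) ≤ ‖xmin‖ := norm_nonneg _
      have h1 : 0 ≤ (r + ‖xmin‖)/‖c‖ := div_nonneg (by linarith) hcpos.le
      rw [hT₀]
      linarith
    have hfar : ∀ s : ℝ, T₀ ≤ |s| → xmin + s • c ∉ A := by
      intro s hs hmem
      have h1 : ‖xmin + s • c‖ < r := by simpa using hr hmem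
      have h2 : ‖s • c‖ ≤ ‖xmin + s • c‖ + ‖xmin‖ :=
        calc ‖s • c‖ = ‖(xmin + s • c) - xmin‖ := by congr 1; abel
        _ ≤ ‖xmin + s • c‖ + ‖xmin‖ := norm_sub_le _ _
      have h3 : ‖s • c‖ = |s| * ‖c‖ := by rw [norm_smul, Real.norm_eq_abs]
      have h4 : T₀ * ‖c‖ ≤ |s| * ‖c‖ := mul_le_mul_of_nonneg_right hs (norm_nonneg _)
      have h5 : T₀ * ‖c‖ = r + ‖xmin‖ + ‖c‖ := by
        rw [hT₀]
        field_simp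
      nlinarith [norm_nonneg xmin]
    have hypA : xmin + T₀ • c ∉ A := hfar T₀ (by rw [abs_of_pos hT₀pos])
    have hynA : xmin + (-T₀) • c ∉ A := hfar (-T₀) (by rw [abs_neg, abs_of_pos hT₀pos])
    obtain ⟨zp, hzpfr, hzpseg⟩ := frontier_mem_segment hAcl hxminA hypA
    obtain ⟨zn, hznfr2, hznseg⟩ := frontier_mem_segment hAcl hxminA hynA
    rw [segment_eq_image'] at hzpseg hznseg
    obtain ⟨θp, hθp, hzp⟩ := hzpseg
    obtain ⟨θn, hθn, hzn⟩ := hznseg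
    have hzp' : zp = xmin + (θp * T₀) • c := by rw [← hzp]; module
    have hzn' : zn = xmin + (-(θn * T₀)) • c := by rw [← hzn]; module
    set tp := θp * T₀ with htpdef
    set tn := θn * T₀ with htndef
    have htp : 0 ≤ tp := mul_nonneg hθp.1 hT₀pos.le
    have htn : 0 ≤ tn := mul_nonneg hθn.1 hT₀pos.le
    have hzpB : zp ∈ B := hfrsub hzpfr
    have hznB : zn ∈ B := hfrsub hznfr2
    set s := tn + tp with hsdef
    rcases eq_or_lt_of_le (add_nonneg htn htp) with hz0 | hlt
    · -- tn = tp = 0, so zp = xmin ∈ B, contradiction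
      have htp0 : tp = 0 := by linarith
      apply haB
      have : zp = xmin := by rw [hzp', htp0]; simp
      rwa [← this]
    · have hs0 : s ≠ 0 := ne_of_gt hlt
      have e1 : s • xmin = tp • zn + tn • zp := by rw [hzp', hzn', hsdef]; module
      have e2 : xmin = (tp/s) • zn + (tn/s) • zp := by
        have h6 := congrArg (fun w => s⁻¹ • w) e1
        simp only [smul_smul, inv_mul_cancel₀ hs0, one_smul, smul_add] at h6
        rw [h6, div_eq_inv_mul, div_eq_inv_mul]
      have hsum : tp/s + tn/s = 1 := by
        rw [← add_div, add_comm, hsdef, div_self hs0]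
      exact haB (hBv.segment_subset hznB hzpB
        ⟨tp/s, tn/s, div_nonneg htp hlt.le, div_nonneg htn hlt.le, hsum, e2.symm⟩)
  · -- degenerate case : interior A = ∅
    rw [not_nonempty_iff_eq_empty] at hintA
    have hintB : interior B = ∅ := by
      have h1 : (Homeomorph.addRight c) '' interior A = interior B := by
        rw [Homeomorph.image_interior]
        rfl
      rw [hintA] at h1
      simpa using h1.symm
    have hfA : frontier A = A := by
      rw [frontier, hintA, hAcl.closure_eq, diff_empty]
    have hfB : frontier B = B := by
      rw [frontier, hintB, hBcl.closure_eq, diff_empty]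
    rw [hfA, hfB]
    exact hint


lemma mem_pointInv {K : Set Plane} {p v : Plane} : v ∈ pointInv K p ↔ p - v ∈ K := by
  constructor
  · rintro ⟨x, hx, rfl⟩; simpa using hx
  · intro h; exact ⟨p - v, h, by simp⟩

lemma mem_translateSet {K : Set Plane} {v p : Plane} : p ∈ translateSet K v ↔ p - v ∈ K := by
  constructor
  · rintro ⟨x, hx, rfl⟩; simpa using hx
  · intro h; exact ⟨p - v, h, by simp⟩

lemma mem_coveredSet {P K : Set Plane} {v p : Plane} :
    p ∈ coveredSet P K v ↔ p ∈ P ∧ v ∈ pointInv K p := by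
  unfold coveredSet
  rw [mem_inter_iff, mem_translateSet, mem_pointInv]

lemma pointInv_convex {K : Set Plane} (hK : Convex ℝ K) (p : Plane) :
    Convex ℝ (pointInv K p) := by
  rintro _ ⟨x, hx, rfl⟩ _ ⟨y, hy, rfl⟩ a b ha hb hab
  refine ⟨a • x + b • y, hK hx hy ha hb hab, ?_⟩
  have h1 : a • (p - x) + b • (p - y) = (a + b) • p - (a • x + b • y) := by module
  simp only
  rw [h1, hab, one_smul]

lemma pointInv_compact {K : Set Plane} (hK : IsCompact K) (p : Plane) :
    IsCompact (pointInv K p) :=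
  hK.image (continuous_const.sub continuous_id)

lemma pointInv_translate {K : Set Plane} (p q : Plane) :
    pointInv K q = (fun x => x + (q - p)) '' (pointInv K p) := by
  ext w
  rw [mem_pointInv]
  constructor
  · intro h
    refine ⟨w - (q - p), mem_pointInv.2 ?_, by simp⟩
    have : p - (w - (q - p)) = q - w := by abel
    rw [this]; exact h
  · rintro ⟨u, hu, rfl⟩
    rw [mem_pointInv] at hu
    have : q - (u + (q - p)) = p - u := by abel
    rw [this]; exact hu

lemma canonical_subset {P K S : Set Plane} (hS : S ∈ canonicalSets P K) : S ⊆ P := by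
  obtain ⟨v, rfl, _, _⟩ := hS; exact inter_subset_left

lemma canonical_covered_eq {P K S : Set Plane} (hS : S ∈ canonicalSets P K) {w : Plane}
    (hw : ∀ p ∈ S, w ∈ pointInv K p) : coveredSet P K w = S := by
  obtain ⟨v, hSv, hne, hmax⟩ := hS
  have hSP : S ⊆ P := by rw [hSv]; exact inter_subset_left
  have hsub : S ⊆ coveredSet P K w := fun p hp => mem_coveredSet.2 ⟨hSP hp, hw p hp⟩
  by_contra hne'
  exact hmax w (ssubset_iff_subset_ne.2 ⟨hsub, fun h => hne' h.symm⟩)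

lemma canonical_singleton_isolated {P K S : Set Plane} (hS : S ∈ canonicalSets P K) {p : Plane}
    (hSp : S = {p}) : ∀ q ∈ P, q ≠ p → pointInv K p ∩ pointInv K q = ∅ := by
  intro q hq hqp
  rw [eq_empty_iff_forall_notMem]
  rintro w ⟨hwp, hwq⟩
  have hcov := canonical_covered_eq hS (w := w) (by
    intro r hr
    rw [hSp, mem_singleton_iff] at hr
    rw [hr]; exact hwp)
  have hqmem : q ∈ coveredSet P K w := mem_coveredSet.2 ⟨hq, hwq⟩
  rw [hcov, hSp, mem_singleton_iff] at hqmem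
  exact hqp hqmem

lemma charge_pair {K P : Set Plane} (hKc : IsCompact K) (hKconv : Convex ℝ K) (hP : P.Finite)
    {S : Set Plane} (hS : S ∈ canonicalSets P K) {p₁ p₂ : Plane} (hp₁ : p₁ ∈ S) (hp₂ : p₂ ∈ S)
    (hp12 : p₁ ≠ p₂) :
    ∃ p q w, p ∈ S ∧ q ∈ S ∧ p ≠ q ∧
      IsLexMin (pointInv K p ∩ pointInv K q) w ∧ coveredSet P K w = S ∧
      (frontier (pointInv K p) ∩ frontier (pointInv K q)).Nonempty := by
  classical
  have hSP : S ⊆ P := canonical_subset hS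
  have hSfin : S.Finite := hP.subset hSP
  obtain ⟨v₀, hSv₀, hSne, -⟩ := id hS
  have hKne : K.Nonempty := by
    obtain ⟨p, hp⟩ := hSne
    rw [hSv₀, mem_coveredSet, mem_pointInv] at hp
    exact ⟨p - v₀, hp.2⟩
  have hv₀ : ∀ p ∈ S, v₀ ∈ pointInv K p := by
    intro p hp
    rw [hSv₀, mem_coveredSet] at hp
    exact hp.2
  set t := hSfin.toFinset with ht
  have htmem : ∀ p, p ∈ t ↔ p ∈ S := fun p => hSfin.mem_toFinset
  set Q := ⋂ p ∈ t, pointInv K p with hQ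
  have hQmem : ∀ {x : Plane}, x ∈ Q → ∀ p ∈ S, x ∈ pointInv K p := by
    intro x hx p hp
    exact mem_iInter₂.1 hx p ((htmem p).2 hp)
  have hQv₀ : v₀ ∈ Q := mem_iInter₂.2 fun p hp => hv₀ p ((htmem p).1 hp)
  have hQc : IsCompact Q := by
    have hcl : IsClosed Q :=
      isClosed_iInter fun p => isClosed_iInter fun _ => (pointInv_compact hKc p).isClosed
    exact (pointInv_compact hKc p₁).of_isClosed_subset hcl
      (iInter₂_subset p₁ ((htmem p₁).2 hp₁))
  obtain ⟨w, hw⟩ := exists_isLexMin hQc ⟨v₀, hQv₀⟩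
  set L := {x : Plane | lexLT x w} with hL
  have hwL : w ∉ L := lexLT_irrefl w
  have hwmem : ∀ p ∈ S, w ∈ pointInv K p := hQmem hw.1
  have hpairne : ¬ (∀ a ∈ t, ∀ b ∈ t, (pointInv K a ∩ pointInv K b ∩ L).Nonempty) := by
    intro hall
    obtain ⟨x, hxQ, hxL⟩ := helly_apex t.card t (fun a => pointInv K a) L w rfl
      (fun a _ => pointInv_convex hKconv a) (convex_lexLT w)
      (fun a hat => hwmem a ((htmem a).1 hat)) hwL hall ⟨p₁, (htmem p₁).2 hp₁⟩
    exact hw.2 x hxQ hxL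
  push_neg at hpairne
  obtain ⟨a, hat, b, hbt, hab⟩ := hpairne
  have hfinal : ∃ p q, p ∈ S ∧ q ∈ S ∧ p ≠ q ∧
      (pointInv K p ∩ pointInv K q ∩ L) = ∅ := by
    rcases eq_or_ne a b with rfl | hne'
    · have hex : ∃ q ∈ S, q ≠ a := by
        rcases eq_or_ne p₁ a with rfl | h
        · exact ⟨p₂, hp₂, fun h' => hp12 h'.symm⟩
        · exact ⟨p₁, hp₁, h⟩
      obtain ⟨q, hqS, hqa⟩ := hex
      refine ⟨a, q, (htmem a).1 hat, hqS, Ne.symm hqa, ?_⟩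
      rw [eq_empty_iff_forall_notMem]
      rintro x ⟨⟨hxa, -⟩, hxL⟩
      exact eq_empty_iff_forall_notMem.1 hab x ⟨⟨hxa, hxa⟩, hxL⟩
    · exact ⟨a, b, (htmem a).1 hat, (htmem b).1 hbt, hne', hab⟩
  obtain ⟨p, q, hpS, hqS, hpq, hempty⟩ := hfinal
  have hwp : w ∈ pointInv K p := hwmem p hpS
  have hwq : w ∈ pointInv K q := hwmem q hqS
  refine ⟨p, q, w, hpS, hqS, hpq, ⟨⟨hwp, hwq⟩, ?_⟩, ?_, ?_⟩
  · intro x hx hlt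
    exact eq_empty_iff_forall_notMem.1 hempty x ⟨hx, hlt⟩
  · exact canonical_covered_eq hS hwmem
  · have htr := pointInv_translate (K := K) p q
    have hcne : q - p ≠ 0 := sub_ne_zero.2 (Ne.symm hpq)
    have hA : (pointInv K p ∩ ((fun x => x + (q - p)) '' (pointInv K p))).Nonempty := by
      rw [← htr]; exact ⟨w, hwp, hwq⟩
    have := frontier_inter_frontier_translate (pointInv_compact hKc p)
      (pointInv_convex hKconv p) hcne hA
    rwa [← htr] at this


abbrev GoodPair (K P S : Set Plane) (pq : Plane × Plane) : Prop :=
  pq.1 ∈ P ∧ pq.2 ∈ P ∧ pq.1 ≠ pq.2 ∧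
  (frontier (pointInv K pq.1) ∩ frontier (pointInv K pq.2)).Nonempty ∧
  ∃ w, IsLexMin (pointInv K pq.1 ∩ pointInv K pq.2) w ∧ coveredSet P K w = S


end S9

open S9 in
/-- for a convex compact prototype `K` and a finite point set `P` with `n`
points, the number of distinct canonical covered point sets is at most `k + e₀ ≤ k + n`,
where `k` is the number of intersecting pairs among the point inverses through `P` and
`e₀` the number of point inverses disjoint from all others. -/
theorem stmt_9 (K : Set Plane) (hKc : IsCompact K) (hKconv : Convex ℝ K)
    (P : Set Plane) (hP : P.Finite) (n : ℕ) (hn : P.ncard = n)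
    (k e₀ : ℕ)
    (hk : k = Set.ncard {s : Set Plane | ∃ p ∈ P, ∃ q ∈ P, p ≠ q ∧ s = {p, q} ∧
        (frontier (pointInv K p) ∩ frontier (pointInv K q)).Nonempty})
    (he₀ : e₀ = Set.ncard {p ∈ P | ∀ q ∈ P, q ≠ p →
        frontier (pointInv K p) ∩ frontier (pointInv K q) = ∅}) :
    (canonicalSets P K).ncard ≤ k + e₀ ∧ k + e₀ ≤ k + n := by

  classical
  set KS := {s : Set Plane | ∃ p ∈ P, ∃ q ∈ P, p ≠ q ∧ s = {p, q} ∧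
      (frontier (pointInv K p) ∩ frontier (pointInv K q)).Nonempty} with hKS
  set ES := {p ∈ P | ∀ q ∈ P, q ≠ p →
      frontier (pointInv K p) ∩ frontier (pointInv K q) = ∅} with hES
  have he : e₀ ≤ n := by
    rw [he₀, ← hn]
    exact Set.ncard_le_ncard (sep_subset _ _) hP
  refine ⟨?_, by omega⟩
  rw [hk, he₀]
  have hKSfin : KS.Finite := by
    apply Set.Finite.subset
      ((hP.prod hP).image (fun pq : Plane × Plane => ({pq.1, pq.2} : Set Plane)))
    rintro s ⟨p, hp, q, hq, hne, rfl, -⟩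
    exact ⟨(p, q), ⟨hp, hq⟩, rfl⟩
  have hESfin : ES.Finite := hP.subset (sep_subset _ _)
  set K1 := {S ∈ canonicalSets P K | ∃ p : Plane, S = {p}} with hK1
  set K2 := canonicalSets P K \ K1 with hK2
  have hsplit : canonicalSets P K = K2 ∪ K1 := by
    ext S
    constructor
    · intro h
      by_cases h1 : S ∈ K1
      exacts [Or.inr h1, Or.inl ⟨h, h1⟩]
    · rintro (h | h)
      exacts [h.1, h.1]
  have hb1 : K1.ncard ≤ ES.ncard := by
    have hsub : K1 ⊆ (fun p : Plane => ({p} : Set Plane)) '' ES := by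
      rintro S ⟨hSc, p, rfl⟩
      refine ⟨p, ⟨canonical_subset hSc rfl, ?_⟩, rfl⟩
      intro q hq hqp
      have h0 := canonical_singleton_isolated hSc rfl q hq hqp
      rw [eq_empty_iff_forall_notMem]
      rintro x ⟨hx1, hx2⟩
      exact eq_empty_iff_forall_notMem.1 h0 x
        ⟨(pointInv_compact hKc p).isClosed.frontier_subset hx1,
         (pointInv_compact hKc q).isClosed.frontier_subset hx2⟩
    calc K1.ncard ≤ ((fun p : Plane => ({p} : Set Plane)) '' ES).ncard :=
          Set.ncard_le_ncard hsub (hESfin.image _)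
      _ ≤ ES.ncard := Set.ncard_image_le hESfin
  have hb2 : K2.ncard ≤ KS.ncard := by
    set f : Set Plane → Set Plane := fun S =>
      if h : ∃ pq : Plane × Plane, GoodPair K P S pq then {h.choose.1, h.choose.2} else ∅ with hf
    have hgood : ∀ S ∈ K2, ∃ pq : Plane × Plane, GoodPair K P S pq := by
      rintro S ⟨hSc, hSns⟩
      obtain ⟨v, hSv, hSne, -⟩ := id hSc
      obtain ⟨p₁, hp₁⟩ := hSne
      have hex : ∃ p₂ ∈ S, p₁ ≠ p₂ := by
        by_contra hno
        push_neg at hno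
        apply hSns
        refine ⟨hSc, p₁, ?_⟩
        ext x
        simp only [mem_singleton_iff]
        exact ⟨fun hx => (hno x hx).symm, fun hx => hx ▸ hp₁⟩
      obtain ⟨p₂, hp₂, h12⟩ := hex
      obtain ⟨p, q, w, hpS, hqS, hpq, hlex, hcov, hfr⟩ :=
        charge_pair hKc hKconv hP hSc hp₁ hp₂ h12
      exact ⟨(p, q), canonical_subset hSc hpS, canonical_subset hSc hqS, hpq, hfr, w, hlex, hcov⟩
    have hmaps : ∀ S ∈ K2, f S ∈ KS := by
      intro S hS
      have h := hgood S hS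
      have hfS : f S = {h.choose.1, h.choose.2} := dif_pos h
      obtain ⟨h1, h2, h3, h4, -⟩ := h.choose_spec
      rw [hfS]
      exact ⟨_, h1, _, h2, h3, rfl, h4⟩
    have hinj : Set.InjOn f K2 := by
      intro S hSK2 S' hS'K2 hff
      have h := hgood S hSK2
      have h' := hgood S' hS'K2
      have hfS : f S = {h.choose.1, h.choose.2} := dif_pos h
      have hfS' : f S' = {h'.choose.1, h'.choose.2} := dif_pos h'
      obtain ⟨-, -, -, -, w, hw, hcov⟩ := h.choose_spec
      obtain ⟨-, -, -, -, w', hw', hcov'⟩ := h'.choose_spec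
      rw [hfS, hfS', Set.pair_eq_pair_iff] at hff
      have hsame : pointInv K h.choose.1 ∩ pointInv K h.choose.2
          = pointInv K h'.choose.1 ∩ pointInv K h'.choose.2 := by
        rcases hff with ⟨e1, e2⟩ | ⟨e1, e2⟩
        · rw [e1, e2]
        · rw [e1, e2, inter_comm]
      rw [hsame] at hw
      have hww : w = w' := isLexMin_unique hw hw'
      rw [← hcov, ← hcov', hww]
    exact Set.ncard_le_ncard_of_injOn f hmaps hinj hKSfin
  calc (canonicalSets P K).ncard = (K2 ∪ K1).ncard := by rw [← hsplit]
    _ ≤ K2.ncard + K1.ncard := Set.ncard_union_le _ _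
    _ ≤ KS.ncard + ES.ncard := add_le_add hb2 hb1
end

section
/- If K ⊆ ℝ² is convex and S ⊆ P is the covered point set of some canonical translate, then the region of positions R(S) = ⋂_{p∈S}(p - K) ∖ ⋃_{p∈P∖S}(p - K) of translates covering exactly S need not be convex, but the full region ⋂_{p∈S}(p - K) of translates covering at least S is convex; moreover if S is maximal (canonical), then R(S) = ⋂_{p∈S}(p - K), and hence R(S) is convex. -/
/-- The region of positions of translates covering exactly the point set `S`. -/
def exactRegion (P K : Set Plane) (S : Set Plane) : Set Plane :=
  (⋂ p ∈ S, pointInv K p) \ ⋃ p ∈ P \ S, pointInv K p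

lemma pointInv_convex (K : Set Plane) (hK : Convex ℝ K) (p : Plane) :
    Convex ℝ (pointInv K p) := by
  have : pointInv K p = (fun x => p + x) '' ((fun x => (-1 : ℝ) • x) '' K) := by
    ext y
    simp [pointInv, Set.image_image, sub_eq_add_neg]
    constructor
    · rintro ⟨x, hx, rfl⟩
      convert hx using 1
      abel
    · intro h
      exact ⟨-y + p, h, by abel⟩
  rw [this]
  exact ((hK.smul _).translate p)

/-- for convex `K`, the region `⋂_{p∈S}(p - K)` of positions of translates
covering at least `S` is convex; and if `S` is a canonical (maximal) covered point set
then the region of positions covering exactly `S` equals `⋂_{p∈S}(p - K)`, hence is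
convex. -/
theorem stmt_12 (K : Set Plane) (hKc : IsCompact K) (hKconv : Convex ℝ K)
    (P : Set Plane) (hP : P.Finite) (S : Set Plane)
    (hreal : ∃ v : Plane, S = coveredSet P K v)
    (hmax : ∀ w : Plane, ¬ S ⊂ coveredSet P K w) :
    Convex ℝ (⋂ p ∈ S, pointInv K p) ∧
    exactRegion P K S = ⋂ p ∈ S, pointInv K p ∧
    Convex ℝ (exactRegion P K S) := by
  have hSP : S ⊆ P := by
    obtain ⟨v, rfl⟩ := hreal
    exact Set.inter_subset_left
  have hconv : Convex ℝ (⋂ p ∈ S, pointInv K p) :=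
    convex_iInter fun p => convex_iInter fun _ => pointInv_convex K hKconv p
  have key : exactRegion P K S = ⋂ p ∈ S, pointInv K p := by
    refine Set.Subset.antisymm Set.diff_subset fun v hv2 => ⟨hv2, fun hv1 => ?_⟩
    simp only [Set.mem_iUnion, Set.mem_iInter] at hv1 hv2
    obtain ⟨q, hqPS, hqv⟩ := hv1
    -- S ⊆ coveredSet P K v
    have hsub : S ⊆ coveredSet P K v := by
      intro p hp
      have := hv2 p hp
      obtain ⟨k, hk, hke⟩ := this
      refine ⟨hSP hp, ⟨k, hk, ?_⟩⟩
      have : p - k = v := hke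
      rw [← this]; simp
    have hq : q ∈ coveredSet P K v := by
      obtain ⟨k, hk, hke⟩ := hqv
      refine ⟨hqPS.1, ⟨k, hk, ?_⟩⟩
      have : q - k = v := hke
      rw [← this]; simp
    have : S ⊂ coveredSet P K v := ⟨hsub, fun h => hqPS.2 (h hq)⟩
    exact hmax v this
  exact ⟨hconv, key, key ▸ hconv⟩
end

section
/- For every n divisible by 4 there is a configuration of n unit circles in the plane with Θ(n²) intersecting pairs and Θ(n²) distinct maximal covered point sets (canonical disks); hence the bound of k + n on the number of distinct canonical translates for convex prototypes is tight up to constants. -/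
/-! ### Auxiliary construction -/

noncomputable def pt (x y : ℝ) : Plane := WithLp.toLp 2 ![x, y]

lemma pt_dist (x1 y1 x2 y2 : ℝ) :
    dist (pt x1 y1) (pt x2 y2) = Real.sqrt ((x1 - x2)^2 + (y1 - y2)^2) := by
  rw [EuclideanSpace.dist_eq]
  simp [pt, Fin.sum_univ_two, Real.dist_eq, sq_abs]

lemma pt_inj {x1 y1 x2 y2 : ℝ} (h : pt x1 y1 = pt x2 y2) : x1 = x2 ∧ y1 = y2 :=
  ⟨by simpa [pt] using congrArg (fun v : Plane => v 0) h,
    by simpa [pt] using congrArg (fun v : Plane => v 1) h⟩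

lemma pt_dist_le_one {x1 y1 x2 y2 : ℝ} (h : (x1 - x2)^2 + (y1 - y2)^2 ≤ 1) :
    dist (pt x1 y1) (pt x2 y2) ≤ 1 := by
  rw [pt_dist]
  calc Real.sqrt ((x1 - x2)^2 + (y1 - y2)^2) ≤ Real.sqrt 1 := Real.sqrt_le_sqrt h
  _ = 1 := Real.sqrt_one

lemma pt_dist_gt_one {x1 y1 x2 y2 : ℝ} (h : 1 < (x1 - x2)^2 + (y1 - y2)^2) :
    1 < dist (pt x1 y1) (pt x2 y2) := by
  rw [pt_dist, Real.lt_sqrt (by norm_num)]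
  simpa using h

lemma pt_dist_lt_two {x1 y1 x2 y2 : ℝ} (h : (x1 - x2)^2 + (y1 - y2)^2 < 4) :
    dist (pt x1 y1) (pt x2 y2) < 2 := by
  rw [pt_dist, Real.sqrt_lt' (by norm_num)]
  norm_num
  exact h

lemma pt_dist_gt_two {x1 y1 x2 y2 : ℝ} (h : 4 < (x1 - x2)^2 + (y1 - y2)^2) :
    2 < dist (pt x1 y1) (pt x2 y2) := by
  rw [pt_dist, Real.lt_sqrt (by positivity)]
  norm_num
  exact h

/-- the grid spacing -/
noncomputable def gg (a : ℕ) : ℝ := 1 / (100 * ((a : ℝ) + 1)^2)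

lemma gg_pos (a : ℕ) : 0 < gg a := by
  unfold gg; positivity

lemma gg_key (a : ℕ) : ((a : ℝ) + 1)^2 * gg a = 1 / 100 := by
  unfold gg
  field_simp

lemma gg_small (a : ℕ) : ((a : ℝ) + 1) * gg a ≤ 1 / 100 := by
  have h := gg_key a
  have h1 : (1 : ℝ) ≤ (a : ℝ) + 1 := by
    have : (0:ℝ) ≤ (a:ℝ) := Nat.cast_nonneg a
    linarith
  nlinarith [gg_pos a]

lemma gg_sq_small (a : ℕ) : (((a : ℝ) + 1) * gg a)^2 ≤ gg a / 8 := by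
  have h := gg_key a
  have h1 : (1 : ℝ) ≤ (a : ℝ) + 1 := by
    have : (0:ℝ) ≤ (a:ℝ) := Nat.cast_nonneg a
    linarith
  nlinarith [gg_pos a, gg_small a]

/-- The four families of points. -/
noncomputable def Wpt (a : ℕ) (i : ℕ) : Plane := pt ((i : ℝ) * gg a + gg a / 4 - 1) 0
noncomputable def Ept (a : ℕ) (j : ℕ) : Plane := pt (1 + (j : ℝ) * gg a) 0
noncomputable def Npt (a : ℕ) (k : ℕ) : Plane := pt 0 (1 + (k : ℝ) * gg a)
noncomputable def Spt (a : ℕ) (l : ℕ) : Plane := pt 0 ((l : ℝ) * gg a + gg a / 4 - 1)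

noncomputable def cfg (a : ℕ) (m : Fin (4 * a)) : Plane :=
  if m.val < a then Wpt a (m.val + 1)
  else if m.val < 2 * a then Ept a (m.val - a + 1)
  else if m.val < 3 * a then Npt a (m.val - 2 * a + 1)
  else Spt a (m.val - 3 * a + 1)

/-- witness centers -/
noncomputable def wit (a p q : ℕ) : Plane :=
  pt ((p : ℝ) * gg a + gg a / 8) ((q : ℝ) * gg a + gg a / 8)

noncomputable def SS (a p q : ℕ) : Set Plane :=
  coveredSet (Set.range (cfg a)) (Metric.closedBall (0 : Plane) 1) (wit a p q)

lemma mem_ball_iff (v x : Plane) :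
    x ∈ translateSet (Metric.closedBall (0 : Plane) 1) v ↔ dist x v ≤ 1 := by
  constructor
  · rintro ⟨y, hy, rfl⟩
    simp only [Metric.mem_closedBall, dist_zero_right] at hy
    simpa [dist_eq_norm] using hy
  · intro h
    exact ⟨x - v, by simpa [dist_eq_norm] using h, sub_add_cancel x v⟩

lemma mem_coveredSet_iff (P : Set Plane) (v x : Plane) :
    x ∈ coveredSet P (Metric.closedBall (0 : Plane) 1) v ↔ x ∈ P ∧ dist x v ≤ 1 := by
  unfold coveredSet
  rw [Set.mem_inter_iff, mem_ball_iff]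

section Main

variable {a : ℕ}

lemma Wpt_mem (ha : 0 < a) {i : ℕ} (h1 : 1 ≤ i) (h2 : i ≤ a) :
    Wpt a i ∈ Set.range (cfg a) := by
  refine ⟨⟨i - 1, by omega⟩, ?_⟩
  unfold cfg
  rw [if_pos (show i - 1 < a by omega)]
  show Wpt a (i - 1 + 1) = Wpt a i
  rw [Nat.sub_add_cancel h1]

lemma Ept_mem (ha : 0 < a) {j : ℕ} (h1 : 1 ≤ j) (h2 : j ≤ a) :
    Ept a j ∈ Set.range (cfg a) := by
  refine ⟨⟨a + j - 1, by omega⟩, ?_⟩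
  unfold cfg
  rw [if_neg (show ¬ (a + j - 1 < a) by omega), if_pos (show a + j - 1 < 2 * a by omega)]
  show Ept a (a + j - 1 - a + 1) = Ept a j
  have e : a + j - 1 - a + 1 = j := by omega
  rw [e]

lemma Npt_mem (ha : 0 < a) {k : ℕ} (h1 : 1 ≤ k) (h2 : k ≤ a) :
    Npt a k ∈ Set.range (cfg a) := by
  refine ⟨⟨2 * a + k - 1, by omega⟩, ?_⟩
  unfold cfg
  rw [if_neg (show ¬ (2 * a + k - 1 < a) by omega),
    if_neg (show ¬ (2 * a + k - 1 < 2 * a) by omega),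
    if_pos (show 2 * a + k - 1 < 3 * a by omega)]
  show Npt a (2 * a + k - 1 - 2 * a + 1) = Npt a k
  have e : 2 * a + k - 1 - 2 * a + 1 = k := by omega
  rw [e]

lemma Spt_mem (ha : 0 < a) {l : ℕ} (h1 : 1 ≤ l) (h2 : l ≤ a) :
    Spt a l ∈ Set.range (cfg a) := by
  refine ⟨⟨3 * a + l - 1, by omega⟩, ?_⟩
  unfold cfg
  rw [if_neg (show ¬ (3 * a + l - 1 < a) by omega),
    if_neg (show ¬ (3 * a + l - 1 < 2 * a) by omega),
    if_neg (show ¬ (3 * a + l - 1 < 3 * a) by omega)]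
  show Spt a (3 * a + l - 1 - 3 * a + 1) = Spt a l
  have e : 3 * a + l - 1 - 3 * a + 1 = l := by omega
  rw [e]

lemma range_cases {x : Plane} (hx : x ∈ Set.range (cfg a)) :
    (∃ i, 1 ≤ i ∧ i ≤ a ∧ x = Wpt a i) ∨ (∃ j, 1 ≤ j ∧ j ≤ a ∧ x = Ept a j) ∨
    (∃ k, 1 ≤ k ∧ k ≤ a ∧ x = Npt a k) ∨ (∃ l, 1 ≤ l ∧ l ≤ a ∧ x = Spt a l) := by
  obtain ⟨m, rfl⟩ := hx
  have hm := m.isLt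
  unfold cfg
  split_ifs with h1 h2 h3
  · exact Or.inl ⟨m.val + 1, by omega, by omega, rfl⟩
  · exact Or.inr (Or.inl ⟨m.val - a + 1, by omega, by omega, rfl⟩)
  · exact Or.inr (Or.inr (Or.inl ⟨m.val - 2*a + 1, by omega, by omega, rfl⟩))
  · exact Or.inr (Or.inr (Or.inr ⟨m.val - 3*a + 1, by omega, by omega, rfl⟩))

/-! ### numeric core lemmas -/

lemma cover_core {G s y : ℝ} (hG : 0 < G) (h1 : G / 8 ≤ s) (h2 : s ≤ 1)
    (h3 : y^2 ≤ G / 8) : (s - 1)^2 + y^2 ≤ 1 := by nlinarith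

lemma ybound {q : ℕ} (h2 : q ≤ a) : ((q:ℝ) * gg a + gg a / 8)^2 ≤ gg a / 8 := by
  have h0 := gg_pos a
  have hq : (q : ℝ) ≤ (a : ℝ) := by exact_mod_cast h2
  have hs := gg_sq_small a
  have hb : (q:ℝ) * gg a + gg a / 8 ≤ ((a:ℝ)+1) * gg a := by nlinarith
  have hnn : (0:ℝ) ≤ (q:ℝ) * gg a + gg a / 8 := by positivity
  nlinarith [sq_nonneg (((a:ℝ)+1) * gg a)]

lemma sbound {p i : ℕ} (hpi : p ≤ i) (hi : i ≤ a) :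
    gg a / 8 ≤ ((i:ℝ) - (p:ℝ)) * gg a + gg a / 8 ∧
      ((i:ℝ) - (p:ℝ)) * gg a + gg a / 8 ≤ 1 := by
  have h0 := gg_pos a
  have h1 : (p : ℝ) ≤ (i : ℝ) := by exact_mod_cast hpi
  have h2 : (i : ℝ) ≤ (a : ℝ) := by exact_mod_cast hi
  have h3 := gg_small a
  constructor
  · nlinarith
  · nlinarith

/-! ### membership characterizations in `SS a p q` -/

lemma dist_W_wit {p q i : ℕ} (hq2 : q ≤ a) (hi2 : i ≤ a) :
    dist (Wpt a i) (wit a p q) ≤ 1 ↔ p ≤ i := by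
  have hG := gg_pos a
  have hy := ybound (a := a) hq2
  unfold Wpt wit
  constructor
  · intro h
    by_contra hc
    push_neg at hc
    have hpi : (i : ℝ) + 1 ≤ (p : ℝ) := by exact_mod_cast hc
    have : 1 < dist (pt ((i : ℝ) * gg a + gg a / 4 - 1) 0)
        (pt ((p : ℝ) * gg a + gg a / 8) ((q : ℝ) * gg a + gg a / 8)) := by
      apply pt_dist_gt_one
      nlinarith [sq_nonneg ((0:ℝ) - ((q:ℝ) * gg a + gg a / 8)),
        sq_nonneg (((p:ℝ) - (i:ℝ)) * gg a - gg a / 8)]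
    linarith
  · intro h
    obtain ⟨hs1, hs2⟩ := sbound h hi2
    apply pt_dist_le_one
    have key := cover_core hG hs1 hs2 hy
    nlinarith [key]

lemma dist_E_wit {p q j : ℕ} (hq2 : q ≤ a) (hp2 : p ≤ a) :
    dist (Ept a j) (wit a p q) ≤ 1 ↔ j ≤ p := by
  have hG := gg_pos a
  have hy := ybound (a := a) hq2
  unfold Ept wit
  constructor
  · intro h
    by_contra hc
    push_neg at hc
    have hpj : (p : ℝ) + 1 ≤ (j : ℝ) := by exact_mod_cast hc
    have : 1 < dist (pt (1 + (j : ℝ) * gg a) 0)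
        (pt ((p : ℝ) * gg a + gg a / 8) ((q : ℝ) * gg a + gg a / 8)) := by
      apply pt_dist_gt_one
      nlinarith [sq_nonneg ((0:ℝ) - ((q:ℝ) * gg a + gg a / 8)),
        sq_nonneg (((j:ℝ) - (p:ℝ)) * gg a - gg a / 8)]
    linarith
  · intro h
    obtain ⟨hs1, hs2⟩ := sbound h hp2
    apply pt_dist_le_one
    have key := cover_core hG hs1 hs2 hy
    nlinarith [key]

lemma dist_N_wit {p q k : ℕ} (hp2 : p ≤ a) (hq2 : q ≤ a) :
    dist (Npt a k) (wit a p q) ≤ 1 ↔ k ≤ q := by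
  have hG := gg_pos a
  have hy := ybound (a := a) hp2
  unfold Npt wit
  constructor
  · intro h
    by_contra hc
    push_neg at hc
    have hqk : (q : ℝ) + 1 ≤ (k : ℝ) := by exact_mod_cast hc
    have : 1 < dist (pt 0 (1 + (k : ℝ) * gg a))
        (pt ((p : ℝ) * gg a + gg a / 8) ((q : ℝ) * gg a + gg a / 8)) := by
      apply pt_dist_gt_one
      nlinarith [sq_nonneg ((0:ℝ) - ((p:ℝ) * gg a + gg a / 8)),
        sq_nonneg (((k:ℝ) - (q:ℝ)) * gg a - gg a / 8)]
    linarith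
  · intro h
    obtain ⟨hs1, hs2⟩ := sbound h hq2
    apply pt_dist_le_one
    have key := cover_core hG hs1 hs2 hy
    nlinarith [key]

lemma dist_S_wit {p q l : ℕ} (hp2 : p ≤ a) (hl2 : l ≤ a) :
    dist (Spt a l) (wit a p q) ≤ 1 ↔ q ≤ l := by
  have hG := gg_pos a
  have hy := ybound (a := a) hp2
  unfold Spt wit
  constructor
  · intro h
    by_contra hc
    push_neg at hc
    have hlq : (l : ℝ) + 1 ≤ (q : ℝ) := by exact_mod_cast hc
    have : 1 < dist (pt 0 ((l : ℝ) * gg a + gg a / 4 - 1))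
        (pt ((p : ℝ) * gg a + gg a / 8) ((q : ℝ) * gg a + gg a / 8)) := by
      apply pt_dist_gt_one
      nlinarith [sq_nonneg ((0:ℝ) - ((p:ℝ) * gg a + gg a / 8)),
        sq_nonneg (((q:ℝ) - (l:ℝ)) * gg a - gg a / 8)]
    linarith
  · intro h
    obtain ⟨hs1, hs2⟩ := sbound h hl2
    apply pt_dist_le_one
    have key := cover_core hG hs1 hs2 hy
    nlinarith [key]

/-! ### separation (triangle) lemmas -/

lemma dist_W_E_gt {i j : ℕ} (hij : i < j) (hi : i ≤ a) :
    2 < dist (Wpt a i) (Ept a j) := by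
  have hG := gg_pos a
  have h1 : (i : ℝ) + 1 ≤ (j : ℝ) := by exact_mod_cast hij
  unfold Wpt Ept
  apply pt_dist_gt_two
  nlinarith [sq_nonneg ((0:ℝ) - 0), sq_nonneg (((j:ℝ) - (i:ℝ)) * gg a - gg a / 4)]

lemma dist_S_N_gt {l k : ℕ} (hlk : l < k) (hl : l ≤ a) :
    2 < dist (Spt a l) (Npt a k) := by
  have hG := gg_pos a
  have h1 : (l : ℝ) + 1 ≤ (k : ℝ) := by exact_mod_cast hlk
  unfold Spt Npt
  apply pt_dist_gt_two
  nlinarith [sq_nonneg ((0:ℝ) - 0), sq_nonneg (((k:ℝ) - (l:ℝ)) * gg a - gg a / 4)]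

lemma dist_W_N_lt {i k : ℕ} (hi1 : 1 ≤ i) (hi : i ≤ a) (hk : k ≤ a) :
    dist (Wpt a i) (Npt a k) < 2 := by
  have hG := gg_pos a
  have h1 : (1 : ℝ) ≤ (i : ℝ) := by exact_mod_cast hi1
  have h2 : (i : ℝ) ≤ (a : ℝ) := by exact_mod_cast hi
  have h3 : (k : ℝ) ≤ (a : ℝ) := by exact_mod_cast hk
  have h4 := gg_small a
  unfold Wpt Npt
  apply pt_dist_lt_two
  have hx1 : (0:ℝ) < (i : ℝ) * gg a + gg a / 4 := by positivity
  have hx2 : (i : ℝ) * gg a + gg a / 4 ≤ 1 / 100 := by nlinarith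
  have hy2 : (k : ℝ) * gg a ≤ 1 / 100 := by nlinarith
  have hy0 : (0:ℝ) ≤ (k : ℝ) * gg a := by positivity
  nlinarith

/-! ### canonical sets -/

lemma mem_SS_iff {p q : ℕ} (ha : 0 < a) (hp1 : 1 ≤ p) (hp2 : p ≤ a) (hq1 : 1 ≤ q)
    (hq2 : q ≤ a) (x : Plane) :
    x ∈ SS a p q ↔ x ∈ Set.range (cfg a) ∧ dist x (wit a p q) ≤ 1 :=
  mem_coveredSet_iff _ _ _

lemma W_mem_SS {p q i : ℕ} (ha : 0 < a) (hp1 : 1 ≤ p) (hp2 : p ≤ a) (hq1 : 1 ≤ q)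
    (hq2 : q ≤ a) (hi1 : 1 ≤ i) (hi2 : i ≤ a) (h : p ≤ i) : Wpt a i ∈ SS a p q :=
  (mem_coveredSet_iff _ _ _).2 ⟨Wpt_mem ha hi1 hi2, (dist_W_wit hq2 hi2).2 h⟩

lemma E_mem_SS {p q j : ℕ} (ha : 0 < a) (hp1 : 1 ≤ p) (hp2 : p ≤ a) (hq1 : 1 ≤ q)
    (hq2 : q ≤ a) (hj1 : 1 ≤ j) (hj2 : j ≤ a) (h : j ≤ p) : Ept a j ∈ SS a p q :=
  (mem_coveredSet_iff _ _ _).2 ⟨Ept_mem ha hj1 hj2, (dist_E_wit hq2 hp2).2 h⟩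

lemma N_mem_SS {p q k : ℕ} (ha : 0 < a) (hp1 : 1 ≤ p) (hp2 : p ≤ a) (hq1 : 1 ≤ q)
    (hq2 : q ≤ a) (hk1 : 1 ≤ k) (hk2 : k ≤ a) (h : k ≤ q) : Npt a k ∈ SS a p q :=
  (mem_coveredSet_iff _ _ _).2 ⟨Npt_mem ha hk1 hk2, (dist_N_wit hp2 hq2).2 h⟩

lemma S_mem_SS {p q l : ℕ} (ha : 0 < a) (hp1 : 1 ≤ p) (hp2 : p ≤ a) (hq1 : 1 ≤ q)
    (hq2 : q ≤ a) (hl1 : 1 ≤ l) (hl2 : l ≤ a) (h : q ≤ l) : Spt a l ∈ SS a p q :=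
  (mem_coveredSet_iff _ _ _).2 ⟨Spt_mem ha hl1 hl2, (dist_S_wit hp2 hl2).2 h⟩

lemma SS_maximal {p q : ℕ} (ha : 0 < a) (hp1 : 1 ≤ p) (hp2 : p ≤ a) (hq1 : 1 ≤ q)
    (hq2 : q ≤ a) (w' : Plane) :
    ¬ SS a p q ⊂ coveredSet (Set.range (cfg a)) (Metric.closedBall (0 : Plane) 1) w' := by
  rintro ⟨hsub, hne⟩
  rw [Set.not_subset] at hne
  obtain ⟨e, he, heS⟩ := hne
  obtain ⟨heP, hew⟩ := (mem_coveredSet_iff _ _ _).1 he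
  -- generic step: a point of SS together with e are both within 1 of w'
  have key : ∀ z : Plane, z ∈ SS a p q → dist e z ≤ 2 := by
    intro z hz
    have hzw : dist z w' ≤ 1 := ((mem_coveredSet_iff _ _ _).1 (hsub hz)).2
    calc dist e z ≤ dist e w' + dist w' z := dist_triangle _ _ _
    _ ≤ 1 + 1 := by
        rw [dist_comm w' z]; exact add_le_add hew hzw
    _ = 2 := by norm_num
  rcases range_cases heP with ⟨i, hi1, hi2, rfl⟩ | ⟨j, hj1, hj2, rfl⟩ |
    ⟨k, hk1, hk2, rfl⟩ | ⟨l, hl1, hl2, rfl⟩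
  · -- e = Wpt a i, necessarily i < p, contradiction with Ept a p ∈ SS
    have hip : i < p := by
      by_contra hc
      push_neg at hc
      exact heS (W_mem_SS ha hp1 hp2 hq1 hq2 hi1 hi2 hc)
    have h2 := key (Ept a p) (E_mem_SS ha hp1 hp2 hq1 hq2 hp1 hp2 le_rfl)
    have h3 := dist_W_E_gt (a := a) hip hi2
    linarith
  · -- e = Ept a j, necessarily p < j, contradiction with Wpt a p ∈ SS
    have hpj : p < j := by
      by_contra hc
      push_neg at hc
      exact heS (E_mem_SS ha hp1 hp2 hq1 hq2 hj1 hj2 hc)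
    have h2 := key (Wpt a p) (W_mem_SS ha hp1 hp2 hq1 hq2 hp1 hp2 le_rfl)
    have h3 := dist_W_E_gt (a := a) hpj hp2
    rw [dist_comm] at h2
    linarith
  · -- e = Npt a k, necessarily q < k, contradiction with Spt a q ∈ SS
    have hqk : q < k := by
      by_contra hc
      push_neg at hc
      exact heS (N_mem_SS ha hp1 hp2 hq1 hq2 hk1 hk2 hc)
    have h2 := key (Spt a q) (S_mem_SS ha hp1 hp2 hq1 hq2 hq1 hq2 le_rfl)
    have h3 := dist_S_N_gt (a := a) hqk hq2
    rw [dist_comm] at h2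
    linarith
  · -- e = Spt a l, necessarily l < q, contradiction with Npt a q ∈ SS
    have hlq : l < q := by
      by_contra hc
      push_neg at hc
      exact heS (S_mem_SS ha hp1 hp2 hq1 hq2 hl1 hl2 hc)
    have h2 := key (Npt a q) (N_mem_SS ha hp1 hp2 hq1 hq2 hq1 hq2 le_rfl)
    have h3 := dist_S_N_gt (a := a) hlq hl2
    linarith

lemma SS_canonical {p q : ℕ} (ha : 0 < a) (hp1 : 1 ≤ p) (hp2 : p ≤ a) (hq1 : 1 ≤ q)
    (hq2 : q ≤ a) :
    SS a p q ∈ canonicalSets (Set.range (cfg a)) (Metric.closedBall (0 : Plane) 1) :=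
  ⟨wit a p q, rfl, ⟨Wpt a p, W_mem_SS ha hp1 hp2 hq1 hq2 hp1 hp2 le_rfl⟩,
    fun w' => SS_maximal ha hp1 hp2 hq1 hq2 w'⟩

lemma SS_inj {p q p' q' : ℕ} (ha : 0 < a) (hp1 : 1 ≤ p) (hp2 : p ≤ a) (hq1 : 1 ≤ q)
    (hq2 : q ≤ a) (hp1' : 1 ≤ p') (hp2' : p' ≤ a) (hq1' : 1 ≤ q') (hq2' : q' ≤ a)
    (h : SS a p q = SS a p' q') : p = p' ∧ q = q' := by
  have hW : Wpt a p' ∈ SS a p q := by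
    rw [h]; exact W_mem_SS ha hp1' hp2' hq1' hq2' hp1' hp2' le_rfl
  have hW' : Wpt a p ∈ SS a p' q' := by
    rw [← h]; exact W_mem_SS ha hp1 hp2 hq1 hq2 hp1 hp2 le_rfl
  have hN : Npt a q' ∈ SS a p q := by
    rw [h]; exact N_mem_SS ha hp1' hp2' hq1' hq2' hq1' hq2' le_rfl
  have hN' : Npt a q ∈ SS a p' q' := by
    rw [← h]; exact N_mem_SS ha hp1 hp2 hq1 hq2 hq1 hq2 le_rfl
  have h1 : p ≤ p' := (dist_W_wit hq2 hp2').1 ((mem_coveredSet_iff _ _ _).1 hW).2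
  have h2 : p' ≤ p := (dist_W_wit hq2' hp2).1 ((mem_coveredSet_iff _ _ _).1 hW').2
  have h3 : q' ≤ q := (dist_N_wit hp2 hq2).1 ((mem_coveredSet_iff _ _ _).1 hN).2
  have h4 : q ≤ q' := (dist_N_wit hp2' hq2').1 ((mem_coveredSet_iff _ _ _).1 hN').2
  omega

/-! ### injectivity of the configuration -/

lemma Wpt_x_neg {i : ℕ} (hi : i ≤ a) : (i : ℝ) * gg a + gg a / 4 - 1 < 0 := by
  have hG := gg_pos a
  have h2 : (i : ℝ) ≤ (a : ℝ) := by exact_mod_cast hi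
  have h4 := gg_small a
  nlinarith

lemma cfg_form (m : Fin (4 * a)) :
    (m.val < a ∧ cfg a m = Wpt a (m.val + 1)) ∨
    (a ≤ m.val ∧ m.val < 2 * a ∧ cfg a m = Ept a (m.val - a + 1)) ∨
    (2 * a ≤ m.val ∧ m.val < 3 * a ∧ cfg a m = Npt a (m.val - 2 * a + 1)) ∨
    (3 * a ≤ m.val ∧ cfg a m = Spt a (m.val - 3 * a + 1)) := by
  unfold cfg
  split_ifs with h1 h2 h3
  · exact Or.inl ⟨h1, rfl⟩
  · exact Or.inr (Or.inl ⟨by omega, h2, rfl⟩)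
  · exact Or.inr (Or.inr (Or.inl ⟨by omega, h3, rfl⟩))
  · exact Or.inr (Or.inr (Or.inr ⟨by omega, rfl⟩))

lemma Ex_pos (j : ℕ) : (0:ℝ) < 1 + (j : ℝ) * gg a := by
  have := gg_pos a
  positivity

lemma cfg_inj (ha : 0 < a) : Function.Injective (cfg a) := by
  intro m m' h
  have hm := m.isLt
  have hm' := m'.isLt
  have hG := gg_pos a
  have hGne : gg a ≠ 0 := ne_of_gt hG
  apply Fin.ext
  rcases cfg_form (a := a) m with ⟨u1, e1⟩ | ⟨u1, u1', e1⟩ | ⟨u1, u1', e1⟩ | ⟨u1, e1⟩ <;>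
    rcases cfg_form (a := a) m' with ⟨u2, e2⟩ | ⟨u2, u2', e2⟩ | ⟨u2, u2', e2⟩ | ⟨u2, e2⟩ <;>
    rw [e1, e2] at h <;>
    simp only [Wpt, Ept, Npt, Spt] at h <;>
    obtain ⟨hx, hy⟩ := pt_inj h
  -- W W
  · have hc : ((m.val + 1 : ℕ) : ℝ) = ((m'.val + 1 : ℕ) : ℝ) :=
      mul_right_cancel₀ hGne (by linarith)
    have : m.val + 1 = m'.val + 1 := by exact_mod_cast hc
    omega
  -- W E
  · exfalso
    have h1 := Wpt_x_neg (a := a) (i := m.val + 1) (by omega)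
    have h2 : (0:ℝ) ≤ ((m'.val - a + 1 : ℕ) : ℝ) * gg a := by positivity
    linarith
  -- W N
  · exfalso
    have h1 := Wpt_x_neg (a := a) (i := m.val + 1) (by omega)
    linarith
  -- W S
  · exfalso
    have h1 := Wpt_x_neg (a := a) (i := m.val + 1) (by omega)
    linarith
  -- E W
  · exfalso
    have h1 := Wpt_x_neg (a := a) (i := m'.val + 1) (by omega)
    have h2 : (0:ℝ) ≤ ((m.val - a + 1 : ℕ) : ℝ) * gg a := by positivity
    linarith
  -- E E
  · have hc : ((m.val - a + 1 : ℕ) : ℝ) = ((m'.val - a + 1 : ℕ) : ℝ) :=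
      mul_right_cancel₀ hGne (by linarith)
    have : m.val - a + 1 = m'.val - a + 1 := by exact_mod_cast hc
    omega
  -- E N
  · exfalso
    have h1 := Ex_pos (a := a) (m.val - a + 1)
    linarith
  -- E S
  · exfalso
    have h1 := Ex_pos (a := a) (m.val - a + 1)
    linarith
  -- N W
  · exfalso
    have h1 := Wpt_x_neg (a := a) (i := m'.val + 1) (by omega)
    linarith
  -- N E
  · exfalso
    have h1 := Ex_pos (a := a) (m'.val - a + 1)
    linarith
  -- N N
  · have hc : ((m.val - 2*a + 1 : ℕ) : ℝ) = ((m'.val - 2*a + 1 : ℕ) : ℝ) :=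
      mul_right_cancel₀ hGne (by linarith)
    have : m.val - 2*a + 1 = m'.val - 2*a + 1 := by exact_mod_cast hc
    omega
  -- N S
  · exfalso
    have h1 : (0:ℝ) ≤ ((m.val - 2*a + 1 : ℕ) : ℝ) * gg a := by positivity
    have h2 := Wpt_x_neg (a := a) (i := m'.val - 3*a + 1) (by omega)
    linarith
  -- S W
  · exfalso
    have h1 := Wpt_x_neg (a := a) (i := m.val - 3*a + 1) (by omega)
    linarith
  -- S E
  · exfalso
    have h1 := Ex_pos (a := a) (m'.val - a + 1)
    linarith
  -- S N
  · exfalso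
    have h1 : (0:ℝ) ≤ ((m'.val - 2*a + 1 : ℕ) : ℝ) * gg a := by positivity
    have h2 := Wpt_x_neg (a := a) (i := m.val - 3*a + 1) (by omega)
    linarith
  -- S S
  · have hc : ((m.val - 3*a + 1 : ℕ) : ℝ) = ((m'.val - 3*a + 1 : ℕ) : ℝ) :=
      mul_right_cancel₀ hGne (by linarith)
    have : m.val - 3*a + 1 = m'.val - 3*a + 1 := by exact_mod_cast hc
    omega

end Main

/-- for every `n = 4a` there is a configuration of `n` unit circles
with at least `a² = n²/16` intersecting pairs and at least `a²` distinct maximal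
(canonical) covered point sets, so the `k + n` bound is tight up to constants
(`k ≤ n(n-1)` always). -/
theorem stmt_18 (a : ℕ) (ha : 0 < a) :
    ∃ c : Fin (4 * a) → Plane, Function.Injective c ∧
      a ^ 2 ≤ Set.ncard {p : Fin (4 * a) × Fin (4 * a) | p.1 < p.2 ∧
          dist (c p.1) (c p.2) < 2} ∧
      a ^ 2 ≤ (canonicalSets (Set.range c) (Metric.closedBall (0 : Plane) 1)).ncard := by
  refine ⟨cfg a, cfg_inj ha, ?_, ?_⟩
  · -- intersecting pairs : W × N
    set T : Set (Fin (4 * a) × Fin (4 * a)) :=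
      {p : Fin (4 * a) × Fin (4 * a) | p.1 < p.2 ∧ dist (cfg a p.1) (cfg a p.2) < 2} with hT
    let Gm : Fin a × Fin a → Fin (4 * a) × Fin (4 * a) := fun z =>
      (⟨z.1.val, by have := z.1.isLt; omega⟩, ⟨2 * a + z.2.val, by have := z.2.isLt; omega⟩)
    have hGm : ∀ z : Fin a × Fin a, Gm z ∈ T := by
      rintro ⟨i, k⟩
      have hi := i.isLt
      have hk := k.isLt
      constructor
      · show (⟨i.val, _⟩ : Fin (4*a)) < ⟨2*a + k.val, _⟩
        rw [Fin.lt_def]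
        simp only [Fin.val_mk]
        omega
      · have e1 : cfg a (⟨i.val, by omega⟩ : Fin (4*a)) = Wpt a (i.val + 1) := by
          unfold cfg
          simp only [Fin.val_mk]
          rw [if_pos (by omega : i.val < a)]
        have e2 : cfg a (⟨2 * a + k.val, by omega⟩ : Fin (4*a)) = Npt a (k.val + 1) := by
          unfold cfg
          simp only [Fin.val_mk]
          rw [if_neg (by omega), if_neg (by omega), if_pos (by omega : 2*a + k.val < 3*a)]
          have e : 2 * a + k.val - 2 * a + 1 = k.val + 1 := by omega
          rw [e]
        show dist (cfg a ⟨i.val, _⟩) (cfg a ⟨2 * a + k.val, _⟩) < 2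
        rw [e1, e2]
        exact dist_W_N_lt (by omega) (by omega) (by omega)
    have hGinj : Function.Injective Gm := by
      rintro ⟨i, k⟩ ⟨i', k'⟩ hz
      simp only [Gm, Prod.mk.injEq, Fin.mk.injEq, Fin.val_mk] at hz
      obtain ⟨h1, h2⟩ := hz
      refine Prod.ext (Fin.ext ?_) (Fin.ext ?_)
      · show i.val = i'.val
        exact h1
      · show k.val = k'.val
        omega
    have hrange : Set.range Gm ⊆ T := by
      rintro _ ⟨z, rfl⟩
      exact hGm z
    have hcard : (Set.range Gm).ncard = a ^ 2 := by
      rw [← Nat.card_coe_set_eq, Nat.card_range_of_injective hGinj]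
      simp [Nat.card_eq_fintype_card, pow_two]
    calc a ^ 2 = (Set.range Gm).ncard := hcard.symm
    _ ≤ T.ncard := Set.ncard_le_ncard hrange (Set.toFinite T)
  · -- canonical sets
    let F : Fin a × Fin a → Set Plane := fun z => SS a (z.1.val + 1) (z.2.val + 1)
    have hFinj : Function.Injective F := by
      rintro ⟨p, q⟩ ⟨p', q'⟩ hz
      have hp := p.isLt
      have hq := q.isLt
      have hp' := p'.isLt
      have hq' := q'.isLt
      simp only [F] at hz
      have hres := SS_inj ha (by omega) (by omega) (by omega) (by omega)
        (by omega) (by omega) (by omega) (by omega) hz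
      obtain ⟨hres1, hres2⟩ := hres
      refine Prod.ext (Fin.ext ?_) (Fin.ext ?_)
      · show p.val = p'.val
        omega
      · show q.val = q'.val
        omega
    have hrange : Set.range F ⊆
        canonicalSets (Set.range (cfg a)) (Metric.closedBall (0 : Plane) 1) := by
      rintro _ ⟨z, rfl⟩
      have h1 := z.1.isLt
      have h2 := z.2.isLt
      exact SS_canonical ha (by omega) (by omega) (by omega) (by omega)
    have hfin : (canonicalSets (Set.range (cfg a)) (Metric.closedBall (0 : Plane) 1)).Finite := by
      apply Set.Finite.subset (Set.Finite.finite_subsets (Set.finite_range (cfg a)))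
      rintro S ⟨v, rfl, -, -⟩
      exact Set.inter_subset_left
    have hcard : (Set.range F).ncard = a ^ 2 := by
      rw [← Nat.card_coe_set_eq, Nat.card_range_of_injective hFinj]
      simp [Nat.card_eq_fintype_card, pow_two]
    calc a ^ 2 = (Set.range F).ncard := hcard.symm
    _ ≤ _ := Set.ncard_le_ncard hrange hfin
end
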